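/- Let A₁ = [[−1/2,0,0],[0,0,1],[0,1,0]], A₂ = [[0,0,1],[0,−1/2,0],[1,0,0]], A₃ = [[0,1,0],[1,0,0],[0,0,−1/2]] in M₃(ℂ) (the key-example matrices for d = 3, t = −1/2). Then: (a) the set {A₁², A₂², A₃²} is linearly independent over ℂ; (b) ∑_{m≠n} A_m A_n = 0, i.e. the sum of all six products A_m A_n with m ≠ n vanishes; (c) [A₁,A₂] + [A₂,A₃] + [A₃,A₁] = 0; and (d) A₁A₂ + A₂A₃ + A₃A₁ = 0 and A₁A₃ + A₃A₂ + A₂A₁ = 0. -/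
import Mathlib


open Matrix

noncomputable section

/-- The key-example matrices for `d = 3`, `t = −1/2`:
`A₁ = [[−1/2,0,0],[0,0,1],[0,1,0]]`, `A₂ = [[0,0,1],[0,−1/2,0],[1,0,0]]`,
`A₃ = [[0,1,0],[1,0,0],[0,0,−1/2]]`. -/
def Akey : Fin 3 → Matrix (Fin 3) (Fin 3) ℂ :=
  ![!![-(1/2), 0, 0; 0, 0, 1; 0, 1, 0],
    !![0, 0, 1; 0, -(1/2), 0; 1, 0, 0],
    !![0, 1, 0; 1, 0, 0; 0, 0, -(1/2)]]

private lemma Ak01 : Akey 0 * Akey 1 = !![0, 0, -(1/2); 1, 0, 0; 0, -(1/2), 0] := by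
  ext i j
  fin_cases i <;> fin_cases j <;>
    simp [Akey, Matrix.mul_apply, Fin.sum_univ_three, Matrix.vecHead, Matrix.vecTail]

private lemma Ak02 : Akey 0 * Akey 2 = !![0, -(1/2), 0; 0, 0, -(1/2); 1, 0, 0] := by
  ext i j
  fin_cases i <;> fin_cases j <;>
    simp [Akey, Matrix.mul_apply, Fin.sum_univ_three, Matrix.vecHead, Matrix.vecTail]

private lemma Ak10 : Akey 1 * Akey 0 = !![0, 1, 0; 0, 0, -(1/2); -(1/2), 0, 0] := by
  ext i j
  fin_cases i <;> fin_cases j <;>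
    simp [Akey, Matrix.mul_apply, Fin.sum_univ_three, Matrix.vecHead, Matrix.vecTail]

private lemma Ak12 : Akey 1 * Akey 2 = !![0, 0, -(1/2); -(1/2), 0, 0; 0, 1, 0] := by
  ext i j
  fin_cases i <;> fin_cases j <;>
    simp [Akey, Matrix.mul_apply, Fin.sum_univ_three, Matrix.vecHead, Matrix.vecTail]

private lemma Ak20 : Akey 2 * Akey 0 = !![0, 0, 1; -(1/2), 0, 0; 0, -(1/2), 0] := by
  ext i j
  fin_cases i <;> fin_cases j <;>
    simp [Akey, Matrix.mul_apply, Fin.sum_univ_three, Matrix.vecHead, Matrix.vecTail]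

private lemma Ak21 : Akey 2 * Akey 1 = !![0, -(1/2), 0; 0, 0, 1; -(1/2), 0, 0] := by
  ext i j
  fin_cases i <;> fin_cases j <;>
    simp [Akey, Matrix.mul_apply, Fin.sum_univ_three, Matrix.vecHead, Matrix.vecTail]

private lemma hd1 : Akey 0 * Akey 1 + Akey 1 * Akey 2 + Akey 2 * Akey 0 = 0 := by
  rw [Ak01, Ak12, Ak20]
  ext i j
  fin_cases i <;> fin_cases j <;>
    simp [Matrix.vecHead, Matrix.vecTail] <;> norm_num

private lemma hd2 : Akey 0 * Akey 2 + Akey 2 * Akey 1 + Akey 1 * Akey 0 = 0 := by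
  rw [Ak02, Ak21, Ak10]
  ext i j
  fin_cases i <;> fin_cases j <;>
    simp [Matrix.vecHead, Matrix.vecTail] <;> norm_num

theorem Akey_relations :
    LinearIndependent ℂ (fun m : Fin 3 => Akey m * Akey m) ∧
    (∑ p ∈ Finset.univ.filter (fun p : Fin 3 × Fin 3 => p.1 ≠ p.2),
        Akey p.1 * Akey p.2) = 0 ∧
    (Akey 0 * Akey 1 - Akey 1 * Akey 0) + (Akey 1 * Akey 2 - Akey 2 * Akey 1) +
      (Akey 2 * Akey 0 - Akey 0 * Akey 2) = 0 ∧
    Akey 0 * Akey 1 + Akey 1 * Akey 2 + Akey 2 * Akey 0 = 0 ∧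
    Akey 0 * Akey 2 + Akey 2 * Akey 1 + Akey 1 * Akey 0 = 0 := by
  refine ⟨?_, ?_, ?_, ?_, ?_⟩
  · rw [Fintype.linearIndependent_iff]
    intro g hg m
    have h00 := congrFun (congrFun hg 0) 0
    have h11 := congrFun (congrFun hg 1) 1
    have h22 := congrFun (congrFun hg 2) 2
    simp [Akey, Fin.sum_univ_succ, Matrix.mul_apply, Matrix.add_apply,
      Matrix.smul_apply] at h00 h11 h22
    have e0 : g 0 = 0 := by
      linear_combination (-20/27 : ℂ) * h00 + (16/27 : ℂ) * h11 + (16/27 : ℂ) * h22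
    have e1 : g 1 = 0 := by
      linear_combination (16/27 : ℂ) * h00 + (-20/27 : ℂ) * h11 + (16/27 : ℂ) * h22
    have e2 : g 2 = 0 := by
      linear_combination (16/27 : ℂ) * h00 + (16/27 : ℂ) * h11 + (-20/27 : ℂ) * h22
    fin_cases m
    · exact e0
    · exact e1
    · exact e2
  · have h : (∑ p ∈ Finset.univ.filter (fun p : Fin 3 × Fin 3 => p.1 ≠ p.2),
        Akey p.1 * Akey p.2) =
        (Akey 0 * Akey 1 + Akey 1 * Akey 2 + Akey 2 * Akey 0) +
          (Akey 0 * Akey 2 + Akey 2 * Akey 1 + Akey 1 * Akey 0) := by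
      rw [Finset.sum_filter, Fintype.sum_prod_type]
      simp [Fin.sum_univ_three]
      abel
    rw [h, hd1, hd2, add_zero]
  · calc (Akey 0 * Akey 1 - Akey 1 * Akey 0) + (Akey 1 * Akey 2 - Akey 2 * Akey 1) +
          (Akey 2 * Akey 0 - Akey 0 * Akey 2)
        = (Akey 0 * Akey 1 + Akey 1 * Akey 2 + Akey 2 * Akey 0) -
            (Akey 0 * Akey 2 + Akey 2 * Akey 1 + Akey 1 * Akey 0) := by abel
      _ = 0 := by rw [hd1, hd2, sub_zero]
  · exact hd1
  · exact hd2

end
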